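/- Let K be a category equipped with a faithful functor U : K → Set, and fix an object M of K. On pairs (f, a) where f : M → N is a morphism of K and a ∈ U(N), define (f₁, a₁) E (f₂, a₂) iff there exist morphisms g₁ : N₁ → N and g₂ : N₂ → N with g₁ ∘ f₁ = g₂ ∘ f₂ and U(g₁)(a₁) = U(g₂)(a₂). If K has the amalgamation property (every span N₁ ← M' → N₂ can be completed to a commutative square), then E is a transitive relation; since E is also reflexive and symmetric, it is an equivalence relation. -/
import Mathlib


open CategoryTheory

universe u v

/-- A pointed extension of `M`: a morphism `f : M ⟶ N` together with an element
`a ∈ U(N)`, i.e. (a representative of) a Galois type over `M`. -/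
structure GPt {K : Type u} [Category.{v} K] (U : K ⥤ Type v) (M : K) where
  N : K
  f : M ⟶ N
  a : U.obj N

/-- The Galois-type relation: `(f₁,a₁) E (f₂,a₂)` iff there is a commutative square
`g₁ ∘ f₁ = g₂ ∘ f₂` with `U(g₁)(a₁) = U(g₂)(a₂)`. -/
def GEquiv {K : Type u} [Category.{v} K] (U : K ⥤ Type v) (M : K)
    (p q : GPt U M) : Prop :=
  ∃ (R : K) (g₁ : p.N ⟶ R) (g₂ : q.N ⟶ R),
    p.f ≫ g₁ = q.f ≫ g₂ ∧ U.map g₁ p.a = U.map g₂ q.a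

/-- If `K` (with a faithful functor `U : K ⥤ Type`) has the amalgamation property, then
the Galois-type relation `E` over any object `M` is transitive; since it is also
reflexive and symmetric, it is an equivalence relation. -/
theorem gEquiv_equivalence_of_amalgamation {K : Type u} [Category.{v} K]
    (U : K ⥤ Type v) [U.Faithful] (M : K)
    (amalg : ∀ {A B C : K} (u : A ⟶ B) (v : A ⟶ C),
      ∃ (D : K) (w : B ⟶ D) (x : C ⟶ D), u ≫ w = v ≫ x) :
    Transitive (GEquiv U M) ∧ Equivalence (GEquiv U M) := by
  have htrans : Transitive (GEquiv U M) := by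
    rintro p q r ⟨R, g₁, g₂, hc, he⟩ ⟨S, h₁, h₂, hc', he'⟩
    obtain ⟨D, w, x, hwx⟩ := amalg g₂ h₁
    refine ⟨D, g₁ ≫ w, h₂ ≫ x, ?_, ?_⟩
    · rw [← Category.assoc, hc, Category.assoc, hwx, ← Category.assoc, hc', Category.assoc]
    · simp only [FunctorToTypes.map_comp_apply, he, ← he']
      have := congrArg (fun k => U.map k q.a) hwx
      simpa using this
  refine ⟨htrans, ?_, ?_, fun h h' => htrans h h'⟩
  · intro p
    exact ⟨p.N, 𝟙 p.N, 𝟙 p.N, rfl, rfl⟩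
  · rintro p q ⟨R, g₁, g₂, hc, he⟩
    exact ⟨R, g₂, g₁, hc.symm, he.symm⟩
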